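/- Let V be a 4-dimensional real vector space with a neutral scalar product g, let I be a complex structure on V compatible with g, let X ∈ V be a nonzero null vector, and let U ∈ V be a null vector with g(X,U)=0 and g(IX,U)=2. If S is a g-skew-symmetric endomorphism of V with S ∘ S = id, I ∘ S = −S ∘ I and S X = X, then S u = u for every u ∈ span{X,U} and S u = −u for every u ∈ span{IX,IU}; i.e., the (+1)-eigenspace of S is span{X,U} and the (−1)-eigenspace of S is span{IX,IU}. -/

import Mathlib

/-- A neutral scalar product on a real vector space: a bilinear form admitting a basis
`(e₀,e₁,e₂,e₃)` that is `g`-orthogonal with `g(e₀,e₀)=g(e₁,e₁)=1`, `g(e₂,e₂)=g(e₃,e₃)=-1`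
(so in particular the space is 4-dimensional and `g` is symmetric, nondegenerate of
signature (2,2)). -/
def IsNeutral {V : Type*} [AddCommGroup V] [Module ℝ V]
    (g : V →ₗ[ℝ] V →ₗ[ℝ] ℝ) : Prop :=
  ∃ e : Module.Basis (Fin 4) ℝ V,
    (∀ i j, i ≠ j → g (e i) (e j) = 0) ∧
    g (e 0) (e 0) = 1 ∧ g (e 1) (e 1) = 1 ∧
    g (e 2) (e 2) = -1 ∧ g (e 3) (e 3) = -1

/-- Uniqueness part of Lemma `S`: if `S` is `g`-skew-symmetric with `S² = id`,
`IS = -SI` and `SX = X`, where `X` is a nonzero null vector and `U` is a null vector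
with `g(X,U) = 0` and `g(IX,U) = 2`, then `S = id` on `span{X,U}` and `S = -id` on
`span{IX,IU}`; i.e. the `(+1)`-eigenspace of `S` is `span{X,U}` and the
`(-1)`-eigenspace is `span{IX,IU}`. -/
theorem eigenspaces_of_S_are_spans {V : Type*} [AddCommGroup V] [Module ℝ V]
    (g : V →ₗ[ℝ] V →ₗ[ℝ] ℝ) (hg : IsNeutral g)
    (I : V →ₗ[ℝ] V) (hI : ∀ v, I (I v) = -v)
    (hIg : ∀ u v, g (I u) (I v) = g u v)
    (X : V) (hX : X ≠ 0) (hXnull : g X X = 0)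
    (U : V) (hUnull : g U U = 0) (hXU : g X U = 0) (hIXU : g (I X) U = 2)
    (S : V →ₗ[ℝ] V)
    (hSskew : ∀ u v, g (S u) v = - g u (S v))
    (hS2 : ∀ v, S (S v) = v)
    (hSanti : ∀ v, I (S v) = - S (I v))
    (hSX : S X = X) :
    (∀ u ∈ Submodule.span ℝ {X, U}, S u = u) ∧
    (∀ u ∈ Submodule.span ℝ {I X, I U}, S u = -u) ∧
    LinearMap.ker (S - LinearMap.id) = Submodule.span ℝ {X, U} ∧
    LinearMap.ker (S + LinearMap.id) = Submodule.span ℝ {I X, I U} := by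
  obtain ⟨e, horth, h0, h1, h2, h3⟩ := hg
  -- symmetry of g
  have hsym : ∀ u v, g u v = g v u := by
    have hfl : g = g.flip := by
      apply e.ext; intro i; apply e.ext; intro j
      simp only [LinearMap.flip_apply]
      rcases eq_or_ne i j with rfl | h
      · rfl
      · rw [horth i j h, horth j i h.symm]
    intro u v
    conv_lhs => rw [hfl]
    rfl
  -- I-skewness
  have hIskew : ∀ u v, g (I u) v = - g u (I v) := by
    intro u v
    have h1 : g (I u) (I (I v)) = g u (I v) := hIg u (I v)
    rw [hI v, map_neg] at h1
    linarith
  -- pairing table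
  have pUX : g U X = 0 := by rw [hsym]; exact hXU
  have pIXIX : g (I X) (I X) = 0 := by rw [hIg]; exact hXnull
  have pIUIU : g (I U) (I U) = 0 := by rw [hIg]; exact hUnull
  have pIXIU : g (I X) (I U) = 0 := by rw [hIg]; exact hXU
  have pIUIX : g (I U) (I X) = 0 := by rw [hsym]; exact pIXIU
  have pXIX : g X (I X) = 0 := by
    have h := hIskew X X
    have h2 := hsym (I X) X
    linarith
  have pIXX : g (I X) X = 0 := by rw [hsym]; exact pXIX
  have pUIU : g U (I U) = 0 := by
    have h := hIskew U U
    have h2 := hsym (I U) U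
    linarith
  have pIUU : g (I U) U = 0 := by rw [hsym]; exact pUIU
  have pUIX : g U (I X) = 2 := by rw [hsym]; exact hIXU
  have pXIU : g X (I U) = -2 := by
    have h := hIskew X U
    linarith
  have pIUX : g (I U) X = -2 := by rw [hsym]; exact pXIU
  -- finrank
  have hrank : Module.finrank ℝ V = 4 := by
    rw [Module.finrank_eq_card_basis e]; simp
  -- expansion helper
  have expand : ∀ (c : Fin 4 → ℝ) (t : V),
      g (c 0 • X + c 1 • U + c 2 • (I X) + c 3 • (I U)) t
        = c 0 * g X t + c 1 * g U t + c 2 * g (I X) t + c 3 * g (I U) t := by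
    intro c t
    simp [map_add, map_smul, LinearMap.add_apply, LinearMap.smul_apply, smul_eq_mul]
  -- linear independence of ![X, U, I X, I U]
  have hli : LinearIndependent ℝ ![X, U, I X, I U] := by
    rw [Fintype.linearIndependent_iff]
    intro c hc
    rw [Fin.sum_univ_four] at hc
    simp only [Matrix.cons_val_zero, Matrix.cons_val_one, Matrix.head_cons,
      Matrix.cons_val_two, Matrix.tail_cons, Matrix.cons_val_three] at hc
    have key : ∀ t : V, c 0 * g X t + c 1 * g U t + c 2 * g (I X) t + c 3 * g (I U) t = 0 := by
      intro t
      rw [← expand c t, hc]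
      simp
    have k1 := key (I U); have k2 := key (I X); have k3 := key U; have k4 := key X
    rw [pXIU, pUIU, pIXIU, pIUIU] at k1
    rw [pXIX, pUIX, pIXIX, pIUIX] at k2
    rw [hXU, hUnull, hIXU, pIUU] at k3
    rw [hXnull, pUX, pIXX, pIUX] at k4
    have c0 : c 0 = 0 := by linarith
    have c1 : c 1 = 0 := by linarith
    have c2 : c 2 = 0 := by linarith
    have c3 : c 3 = 0 := by linarith
    intro i
    fin_cases i <;> assumption
  -- span = top
  have hspan : Submodule.span ℝ (Set.range ![X, U, I X, I U]) = ⊤ := by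
    apply hli.span_eq_top_of_card_eq_finrank
    simp [hrank]
  -- coefficient extraction
  have hcoeff : ∀ v : V, ∃ c : Fin 4 → ℝ,
      v = c 0 • X + c 1 • U + c 2 • (I X) + c 3 • (I U) := by
    intro v
    have hv : v ∈ Submodule.span ℝ (Set.range ![X, U, I X, I U]) := by
      rw [hspan]; trivial
    rw [Finsupp.mem_span_range_iff_exists_finsupp] at hv
    obtain ⟨c, hc⟩ := hv
    refine ⟨c, ?_⟩
    rw [← hc, Finsupp.sum_fintype _ _ (by intro i; simp), Fin.sum_univ_four]
    simp [Matrix.cons_val_zero, Matrix.cons_val_one, Matrix.head_cons]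
  -- orthogonality to the four vectors implies zero
  have hzero : ∀ w : V, g w X = 0 → g w U = 0 → g w (I X) = 0 → g w (I U) = 0 → w = 0 := by
    intro w q1 q2 q3 q4
    obtain ⟨c, hc⟩ := hcoeff w
    have key : ∀ t : V, g w t = c 0 * g X t + c 1 * g U t + c 2 * g (I X) t + c 3 * g (I U) t := by
      intro t; rw [hc]; exact expand c t
    have k1 := key (I U); have k2 := key (I X); have k3 := key U; have k4 := key X
    rw [pXIU, pUIU, pIXIU, pIUIU, q4] at k1
    rw [pXIX, pUIX, pIXIX, pIUIX, q3] at k2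
    rw [hXU, hUnull, hIXU, pIUU, q2] at k3
    rw [hXnull, pUX, pIXX, pIUX, q1] at k4
    have c0 : c 0 = 0 := by linarith
    have c1 : c 1 = 0 := by linarith
    have c2 : c 2 = 0 := by linarith
    have c3 : c 3 = 0 := by linarith
    rw [hc, c0, c1, c2, c3]
    simp
  -- S on I X
  have hSIX : S (I X) = - I X := by
    have h := hSanti X
    rw [hSX] at h
    rw [← neg_neg (S (I X)), ← h]
  -- S on I U (preliminary)
  have hSIU' : S (I U) = - I (S U) := by
    have h := hSanti U
    rw [← neg_neg (S (I U)), ← h]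
  -- pairings of S U
  have a1 : g (S U) X = 0 := by
    have h := hSskew U X
    rw [hSX, pUX] at h
    linarith
  have a2 : g (S U) U = 0 := by
    have h := hSskew U U
    have h2 := hsym U (S U)
    linarith
  have a3 : g (S U) (I X) = 2 := by
    have h := hSskew U (I X)
    rw [hSIX, map_neg, pUIX] at h
    linarith
  have a4 : g (S U) (I U) = 0 := by
    have h := hSskew U (I U)
    rw [hSIU', map_neg] at h
    have h2 := hIskew U (S U)
    have h3 := hsym (S U) (I U)
    have h4 := hsym (I U) (S U)
    linarith
  -- S U = U
  have hSU : S U = U := by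
    have hw : S U - U = 0 := by
      apply hzero <;> simp [map_sub, a1, a2, a3, a4, pUX, hUnull, pUIX, pUIU]
    exact sub_eq_zero.mp hw
  have hSIU : S (I U) = - I U := by rw [hSIU', hSU]
  -- part 1
  have part1 : ∀ u ∈ Submodule.span ℝ {X, U}, S u = u := by
    intro u hu
    induction hu using Submodule.span_induction with
    | mem x hx =>
      simp only [Set.mem_insert_iff, Set.mem_singleton_iff] at hx
      rcases hx with rfl | rfl
      · exact hSX
      · exact hSU
    | zero => simp
    | add x y _ _ hx hy => rw [map_add, hx, hy]
    | smul a x _ hx => rw [map_smul, hx]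
  -- part 2
  have part2 : ∀ u ∈ Submodule.span ℝ {I X, I U}, S u = -u := by
    intro u hu
    induction hu using Submodule.span_induction with
    | mem x hx =>
      simp only [Set.mem_insert_iff, Set.mem_singleton_iff] at hx
      rcases hx with rfl | rfl
      · exact hSIX
      · exact hSIU
    | zero => simp
    | add x y _ _ hx hy => rw [map_add, hx, hy, neg_add]
    | smul a x _ hx => rw [map_smul, hx, smul_neg]
  -- kernel 1
  have ker1 : LinearMap.ker (S - LinearMap.id) = Submodule.span ℝ {X, U} := by
    apply le_antisymm
    · intro v hv
      rw [LinearMap.mem_ker, LinearMap.sub_apply, LinearMap.id_apply, sub_eq_zero] at hv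
      have b1 : g v X = 0 := by
        have h := hSskew v X
        rw [hv, hSX] at h
        linarith
      have b2 : g v U = 0 := by
        have h := hSskew v U
        rw [hv, hSU] at h
        linarith
      obtain ⟨c, hc⟩ := hcoeff v
      have e1 : g v X = c 3 * (-2) := by
        rw [hc, expand, hXnull, pUX, pIXX, pIUX]; ring
      have e2 : g v U = c 2 * 2 := by
        rw [hc, expand, hXU, hUnull, hIXU, pIUU]; ring
      have c3 : c 3 = 0 := by rw [b1] at e1; linarith
      have c2 : c 2 = 0 := by rw [b2] at e2; linarith
      rw [hc, c2, c3, zero_smul, zero_smul, add_zero, add_zero]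
      exact Submodule.add_mem _
        (Submodule.smul_mem _ _ (Submodule.subset_span (Set.mem_insert _ _)))
        (Submodule.smul_mem _ _ (Submodule.subset_span (Set.mem_insert_of_mem _ rfl)))
    · intro v hv
      rw [LinearMap.mem_ker, LinearMap.sub_apply, LinearMap.id_apply, sub_eq_zero]
      exact part1 v hv
  -- kernel 2
  have ker2 : LinearMap.ker (S + LinearMap.id) = Submodule.span ℝ {I X, I U} := by
    apply le_antisymm
    · intro v hv
      rw [LinearMap.mem_ker, LinearMap.add_apply, LinearMap.id_apply,
        add_eq_zero_iff_eq_neg] at hv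
      have hIv : S (I v) = I v := by
        have h := hSanti v
        rw [hv, map_neg] at h
        exact (neg_injective h).symm
      have hm : I v ∈ LinearMap.ker (S - LinearMap.id) := by
        rw [LinearMap.mem_ker, LinearMap.sub_apply, LinearMap.id_apply, sub_eq_zero]
        exact hIv
      rw [ker1] at hm
      have h2 : I (I v) ∈ Submodule.map I (Submodule.span ℝ {X, U}) :=
        Submodule.mem_map_of_mem hm
      rw [Submodule.map_span, Set.image_insert_eq, Set.image_singleton, hI] at h2
      exact (Submodule.neg_mem_iff _).mp h2
    · intro v hv
      rw [LinearMap.mem_ker, LinearMap.add_apply, LinearMap.id_apply, part2 v hv]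
      simp
  exact ⟨part1, part2, ker1, ker2⟩
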